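/- Let I = (xy, xz, yz) ⊆ ℂ[x,y,z]. For every integer r ≥ 1, the Newton polyhedron of the symbolic power I^{(2r-1)} is given by Newt(I^{(2r-1)}) = { (a,b,c) ∈ ℝ^3 : a,b,c ≥ 0, a+b ≥ 2r-1, a+c ≥ 2r-1, b+c ≥ 2r-1, and a+b+c ≥ 3r-1 }. -/

import Mathlib

open Ideal MvPolynomial Pointwise

namespace ELS

/-- Contraction of the localized ideal `J·R_S` under `R → R_S` (the `S`-saturation of `J`). -/
noncomputable def satIdeal {R : Type*} [CommRing R] (S : Submonoid R) (J : Ideal R) : Ideal R :=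
  (J.map (algebraMap R (Localization S))).comap (algebraMap R (Localization S))

/-- The complement of a prime ideal, as a submonoid. -/
def primeComplSub {R : Type*} [CommRing R] (P : Ideal R) (hP : P.IsPrime) : Submonoid R :=
  haveI := hP
  P.primeCompl

/-- The symbolic power of a prime ideal: contraction of `P^p R_P` under `R → R_P`. -/
noncomputable def primeSymbolicPower {R : Type*} [CommRing R] (P : Ideal R) (hP : P.IsPrime)
    (p : ℕ) : Ideal R :=
  satIdeal (primeComplSub P hP) (P ^ p)

/-- The multiplicative set of elements lying outside every minimal prime of `I`. -/
def outMinPrimes {R : Type*} [CommRing R] (I : Ideal R) : Submonoid R where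
  carrier := {s | ∀ Q ∈ I.minimalPrimes, s ∉ Q}
  one_mem' := by
    intro Q hQ h1
    exact hQ.1.1.ne_top ((Ideal.eq_top_iff_one Q).mpr h1)
  mul_mem' := by
    intro a b ha hb Q hQ hab
    rcases hQ.1.1.mem_or_mem hab with h | h
    · exact ha Q hQ h
    · exact hb Q hQ h

/-- The symbolic power of an ideal: contraction of `I^p` localized at the complement of the
union of the minimal primes of `I`. -/
noncomputable def symbolicPower {R : Type*} [CommRing R] (I : Ideal R) (p : ℕ) : Ideal R :=
  satIdeal (outMinPrimes I) (I ^ p)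

/-- A monomial ideal: with every polynomial it contains all monomials in its support. -/
def IsMonomialIdeal {n : ℕ} (a : Ideal (MvPolynomial (Fin n) ℂ)) : Prop :=
  ∀ f ∈ a, ∀ v ∈ f.support, (monomial v (1 : ℂ)) ∈ a

/-- The set of exponent vectors of monomials in `a`, viewed inside `ℝ^n`. -/
def monomSet {n : ℕ} (a : Ideal (MvPolynomial (Fin n) ℂ)) : Set (Fin n → ℝ) :=
  {x | ∃ v : Fin n →₀ ℕ, (monomial v (1 : ℂ)) ∈ a ∧ x = fun i => (v i : ℝ)}

/-- The Newton polyhedron of a monomial ideal: the convex hull in `ℝ^n` of the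
exponent vectors of the monomials in `a`. -/
def newt {n : ℕ} (a : Ideal (MvPolynomial (Fin n) ℂ)) : Set (Fin n → ℝ) :=
  convexHull ℝ (monomSet a)

/-- The least total degree of a nonzero polynomial in `J`: the multiplicity at the origin. -/
noncomputable def mult0 {n : ℕ} (J : Ideal (MvPolynomial (Fin n) ℂ)) : ℕ :=
  sInf {d | ∃ f ∈ J, f ≠ 0 ∧ f.totalDegree = d}

end ELS

open ELS

theorem mem_satIdeal {R : Type*} [CommRing R] (S : Submonoid R) (J : Ideal R) (f : R) :
    f ∈ satIdeal S J ↔ ∃ s ∈ S, s * f ∈ J := by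
  constructor
  · intro h
    rw [satIdeal, Ideal.mem_comap, IsLocalization.mem_map_algebraMap_iff S] at h
    obtain ⟨⟨j, s⟩, h⟩ := h
    rw [← _root_.map_mul, IsLocalization.eq_iff_exists S] at h
    obtain ⟨c, hc⟩ := h
    refine ⟨c * s, S.mul_mem c.2 s.2, ?_⟩
    have : (c : R) * (f * s) = c * j := hc
    have hj : ((c : R) * (j : R)) ∈ J := J.mul_mem_left _ j.2
    rw [← this] at hj
    convert hj using 1; ring
  · rintro ⟨s, hs, hsf⟩
    rw [satIdeal, Ideal.mem_comap]
    have h1 : algebraMap R (Localization S) (s * f) ∈ J.map (algebraMap R (Localization S)) :=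
      Ideal.mem_map_of_mem _ hsf
    rw [_root_.map_mul] at h1
    exact (Ideal.unit_mul_mem_iff_mem _ (IsLocalization.map_units (Localization S) ⟨s, hs⟩)).mp h1

abbrev R3 := MvPolynomial (Fin 3) ℂ

/-- Ideal spanned by the monomials whose exponent satisfies `P`. -/
noncomputable def mspan (P : (Fin 3 →₀ ℕ) → Prop) : Ideal R3 :=
  Ideal.span {f | ∃ u, P u ∧ f = monomial u (1 : ℂ)}

theorem mem_mspan_of_support {P : (Fin 3 →₀ ℕ) → Prop} {f : R3}
    (h : ∀ u ∈ f.support, P u) : f ∈ mspan P := by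
  rw [← support_sum_monomial_coeff f]
  refine Submodule.sum_mem _ fun v hv => ?_
  have h1 : monomial v (1 : ℂ) ∈ mspan P := Ideal.subset_span ⟨v, h v hv, rfl⟩
  have : (monomial v (f.coeff v) : R3) = C (f.coeff v) * monomial v 1 := by
    rw [C_mul_monomial, mul_one]
  rw [this]
  exact Ideal.mul_mem_left _ _ h1

theorem support_of_mem_mspan {P : (Fin 3 →₀ ℕ) → Prop}
    (hP : ∀ u w, P u → P (w + u)) {f : R3} (hf : f ∈ mspan P) :
    ∀ w ∈ f.support, P w := by
  refine Submodule.span_induction ?_ ?_ ?_ ?_ hf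
  · rintro g ⟨u, hu, rfl⟩ w hw
    classical
    rw [support_monomial] at hw
    simp only [if_neg (one_ne_zero' ℂ), Finset.mem_singleton] at hw
    subst hw
    simpa using hP w 0 hu
  · intro w hw; simp at hw
  · intro g g' _ _ hg hg' w hw
    classical
    rcases Finset.mem_union.mp (MvPolynomial.support_add hw) with h | h
    · exact hg w h
    · exact hg' w h
  · intro r g _ hg w hw
    classical
    have := MvPolynomial.support_mul r g hw
    rcases Finset.mem_add.mp this with ⟨a, ha, b, hb, rfl⟩
    exact hP b a (hg b hb)

theorem X_eq_mono (i : Fin 3) : (X i : R3) = monomial (Finsupp.single i 1) 1 := rfl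

theorem X_mul_mono (i : Fin 3) (s : Fin 3 →₀ ℕ) :
    (X i : R3) * monomial s 1 = monomial (Finsupp.single i 1 + s) 1 := by
  rw [X_eq_mono, monomial_mul, one_mul]

theorem single_add_sub (i : Fin 3) (u : Fin 3 →₀ ℕ) (h : 1 ≤ u i) :
    Finsupp.single i 1 + (u - Finsupp.single i 1) = u := by
  ext j
  rw [Finsupp.add_apply, Finsupp.tsub_apply]
  rcases eq_or_ne j i with rfl | hne
  · simp; omega
  · simp [Finsupp.single_apply, Ne.symm hne]

theorem X_mem_mspan1 (a b : Fin 3) : (X a : R3) ∈ mspan (fun u => 1 ≤ u a + u b) := by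
  refine Ideal.subset_span ⟨Finsupp.single a 1, ?_, rfl⟩
  simp [Finsupp.single_apply]

theorem span_pair_eq_mspan (a b : Fin 3) :
    (Ideal.span {X a, X b} : Ideal R3) = mspan (fun u => 1 ≤ u a + u b) := by
  apply le_antisymm
  · rw [Ideal.span_le]
    rintro f (rfl | rfl)
    · exact X_mem_mspan1 a b
    · have := X_mem_mspan1 b a
      simpa [add_comm] using this
  · rw [mspan, Ideal.span_le]
    rintro f ⟨u, hu, rfl⟩
    have key : ∀ i : Fin 3, 1 ≤ u i → (X i : R3) ∈ Ideal.span {X a, X b} →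
        (monomial u (1:ℂ)) ∈ Ideal.span {X a, X b} := by
      intro i hi hXi
      have : (monomial u (1:ℂ)) = X i * monomial (u - Finsupp.single i 1) 1 := by
        rw [X_mul_mono, single_add_sub i u hi]
      rw [this]
      exact Ideal.mul_mem_right _ _ hXi
    rcases Nat.lt_or_ge (u a) 1 with h | h
    · exact key b (by omega) (Ideal.subset_span (by simp))
    · exact key a h (Ideal.subset_span (by simp))

theorem mspan_mono {P Q : (Fin 3 →₀ ℕ) → Prop} (h : ∀ u, P u → Q u) : mspan P ≤ mspan Q :=
  Ideal.span_mono (fun f => fun ⟨u, hu, hf⟩ => ⟨u, h u hu, hf⟩)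

theorem span_pair_pow_le (a b : Fin 3) (t : ℕ) :
    (Ideal.span {X a, X b} : Ideal R3) ^ t ≤ mspan (fun u => t ≤ u a + u b) := by
  induction t with
  | zero =>
    intro f _
    exact mem_mspan_of_support (fun u _ => Nat.zero_le _)
  | succ t ih =>
    rw [pow_succ]
    rw [Ideal.mul_le]
    intro f hf g hg
    have hf' : f ∈ mspan (fun u => t ≤ u a + u b) := ih hf
    have key : ∀ i : Fin 3, (i = a ∨ i = b) → f * X i ∈ mspan (fun u => t + 1 ≤ u a + u b) := by
      intro i hi
      apply mem_mspan_of_support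
      intro w hw
      classical
      rcases Finset.mem_add.mp (MvPolynomial.support_mul f (X i) hw) with ⟨c, hc, d, hd, rfl⟩
      rw [support_X, Finset.mem_singleton] at hd
      subst hd
      have hc' : t ≤ c a + c b :=
        support_of_mem_mspan (fun u w hu => by simp [Finsupp.add_apply]; omega) hf' c hc
      simp only [Finsupp.add_apply, Finsupp.single_apply]
      rcases hi with rfl | rfl
      · simp; omega
      · simp [Finsupp.single_apply]; omega
    rcases Ideal.mem_span_pair.mp hg with ⟨p, q, rfl⟩
    have h1 : f * (p * X a) ∈ mspan (fun u => t + 1 ≤ u a + u b) := by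
      have := (mspan _).mul_mem_left p (key a (Or.inl rfl))
      convert this using 1; ring
    have h2 : f * (q * X b) ∈ mspan (fun u => t + 1 ≤ u a + u b) := by
      have := (mspan _).mul_mem_left q (key b (Or.inr rfl))
      convert this using 1; ring
    have := (mspan (fun u => t + 1 ≤ u a + u b)).add_mem h1 h2
    convert this using 1; ring

theorem prod_X_pow_univ (d : Fin 3 →₀ ℕ) : (∏ i : Fin 3, (X i : R3) ^ d i) = monomial d 1 := by
  rw [← prod_X_pow_eq_monomial]
  exact (Finset.prod_subset (Finset.subset_univ _) (by
    intro x _ hx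
    rw [Finsupp.notMem_support_iff] at hx
    simp [hx])).symm

theorem span_pair_eq_ker (a b : Fin 3) (hab : a ≠ b) :
    (Ideal.span {X a, X b} : Ideal R3) =
      RingHom.ker (aeval (R := ℂ) (fun i : Fin 3 => if i = a ∨ i = b then 0 else X i) : R3 →ₐ[ℂ] R3) := by
  set g : Fin 3 → R3 := fun i => if i = a ∨ i = b then 0 else X i with hg
  apply le_antisymm
  · rw [Ideal.span_le]
    rintro f (rfl | rfl) <;>
      · rw [SetLike.mem_coe, RingHom.mem_ker]
        simp [hg]
  · intro f hf
    rw [RingHom.mem_ker] at hf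
    rw [span_pair_eq_mspan]
    apply mem_mspan_of_support
    intro u hu
    by_contra hcon
    have hua : u a = 0 := by omega
    have hub : u b = 0 := by omega
    have hterm : ∀ d : Fin 3 →₀ ℕ,
        (algebraMap ℂ R3 (f.coeff d) * ∏ i, g i ^ d i).coeff u =
          if d = u then f.coeff u else 0 := by
      intro d
      by_cases hda : d a = 0
      · by_cases hdb : d b = 0
        · have hprod : (∏ i, g i ^ d i) = monomial d 1 := by
            rw [← prod_X_pow_univ d]
            apply Finset.prod_congr rfl
            intro i _
            rcases eq_or_ne i a with rfl | hia
            · simp [hda]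
            · rcases eq_or_ne i b with rfl | hib
              · simp [hdb]
              · simp [hg, hia, hib]
          rw [hprod, MvPolynomial.algebraMap_eq, C_mul_monomial, mul_one, coeff_monomial]
          rcases eq_or_ne d u with rfl | hne
          · simp
          · rw [if_neg hne, if_neg hne]
        · have hprod : (∏ i, g i ^ d i) = 0 :=
            Finset.prod_eq_zero (Finset.mem_univ b) (by
              have hgb : g b = 0 := by simp [hg]
              rw [hgb]
              exact zero_pow hdb)
          rw [hprod, mul_zero, MvPolynomial.coeff_zero]
          have hne : d ≠ u := fun h => hdb (h ▸ hub)
          rw [if_neg hne]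
      · have hprod : (∏ i, g i ^ d i) = 0 :=
          Finset.prod_eq_zero (Finset.mem_univ a) (by
            have hga : g a = 0 := by simp [hg]
            rw [hga]
            exact zero_pow hda)
        rw [hprod, mul_zero, MvPolynomial.coeff_zero]
        have hne : d ≠ u := fun h => hda (h ▸ hua)
        rw [if_neg hne]
    have hcoeff : (aeval g f).coeff u = f.coeff u := by
      rw [aeval_def, eval₂_eq']
      rw [MvPolynomial.coeff_sum]
      rw [Finset.sum_congr rfl (fun d _ => hterm d)]
      rw [Finset.sum_ite_eq' f.support u (fun _ => f.coeff u)]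
      rw [if_pos hu]
    rw [hf] at hcoeff
    simp only [MvPolynomial.coeff_zero] at hcoeff
    exact (Finsupp.mem_support_iff.mp hu) hcoeff.symm

theorem span_pair_isPrime (a b : Fin 3) (hab : a ≠ b) :
    (Ideal.span {X a, X b} : Ideal R3).IsPrime := by
  rw [span_pair_eq_ker a b hab]
  exact RingHom.ker_isPrime _

theorem X_not_mem_span_pair (a b c : Fin 3) (hca : c ≠ a) (hcb : c ≠ b) :
    (X c : R3) ∉ Ideal.span {X a, X b} := by
  intro h
  rw [span_pair_eq_mspan] at h
  have := support_of_mem_mspan (P := fun u => 1 ≤ u a + u b)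
    (fun u w hu => by simp [Finsupp.add_apply]; omega) h (Finsupp.single c 1)
    (by rw [support_X]; exact Finset.mem_singleton_self _)
  simp only [Finsupp.single_apply] at this
  rw [if_neg hca, if_neg hcb] at this
  omega

noncomputable def Iabc : Ideal R3 := Ideal.span {X 0 * X 1, X 0 * X 2, X 1 * X 2}

theorem X_mul_X_mem_I (u v : Fin 3) (huv : u ≠ v) : (X u * X v : R3) ∈ Iabc := by
  have mem1 : (X 0 * X 1 : R3) ∈ Iabc := Ideal.subset_span (Or.inl rfl)
  have mem2 : (X 0 * X 2 : R3) ∈ Iabc := Ideal.subset_span (Or.inr (Or.inl rfl))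
  have mem3 : (X 1 * X 2 : R3) ∈ Iabc := Ideal.subset_span (Or.inr (Or.inr rfl))
  fin_cases u <;> fin_cases v <;>
    first
    | exact absurd rfl huv
    | exact mem1
    | exact mem2
    | exact mem3
    | (rw [mul_comm]; first | exact mem1 | exact mem2 | exact mem3)

theorem third_var (u a b c : Fin 3) (hab : a ≠ b) (hca : c ≠ a) (hcb : c ≠ b)
    (hua : u ≠ a) (hub : u ≠ b) : u = c := by
  revert hab hca hcb hua hub
  revert u a b c
  decide

theorem I_le_span_pair (a b c : Fin 3) (hab : a ≠ b) (hca : c ≠ a) (hcb : c ≠ b) :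
    Iabc ≤ (Ideal.span {X a, X b} : Ideal R3) := by
  rw [Iabc, Ideal.span_le]
  have key : ∀ u v : Fin 3, u ≠ v → (X u * X v : R3) ∈ Ideal.span {X a, X b} := by
    intro u v huv
    by_cases hu : u = a ∨ u = b
    · refine Ideal.mul_mem_right _ _ (Ideal.subset_span ?_)
      rcases hu with rfl | rfl
      · exact Or.inl rfl
      · exact Or.inr rfl
    · push_neg at hu
      have huc : u = c := third_var u a b c hab hca hcb hu.1 hu.2
      have hv : v = a ∨ v = b := by
        by_contra hv
        push_neg at hv
        exact huv (huc.trans (third_var v a b c hab hca hcb hv.1 hv.2).symm)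
      refine Ideal.mul_mem_left _ _ (Ideal.subset_span ?_)
      rcases hv with rfl | rfl
      · exact Or.inl rfl
      · exact Or.inr rfl
  rintro f (rfl | rfl | rfl)
  · exact key 0 1 (by decide)
  · exact key 0 2 (by decide)
  · exact key 1 2 (by decide)

theorem span_pair_mem_minimalPrimes (a b c : Fin 3) (hab : a ≠ b) (hca : c ≠ a) (hcb : c ≠ b) :
    (Ideal.span {X a, X b} : Ideal R3) ∈ Iabc.minimalPrimes := by
  constructor
  · exact ⟨span_pair_isPrime a b hab, I_le_span_pair a b c hab hca hcb⟩
  · rintro Q' ⟨hQ'prime, hIQ'⟩ hle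
    have hXc : (X c : R3) ∉ Q' := fun h => X_not_mem_span_pair a b c hca hcb (hle h)
    have hXa : (X a : R3) ∈ Q' := by
      rcases hQ'prime.mem_or_mem (hIQ' (X_mul_X_mem_I a c (Ne.symm hca))) with h | h
      · exact h
      · exact absurd h hXc
    have hXb : (X b : R3) ∈ Q' := by
      rcases hQ'prime.mem_or_mem (hIQ' (X_mul_X_mem_I b c (Ne.symm hcb))) with h | h
      · exact h
      · exact absurd h hXc
    rw [Ideal.span_le]
    rintro f (rfl | rfl)
    · exact hXa
    · exact hXb

theorem minimalPrimes_I_sub (Q : Ideal R3) (hQ : Q ∈ Iabc.minimalPrimes) :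
    Q = Ideal.span {X 0, X 1} ∨ Q = Ideal.span {X 0, X 2} ∨ Q = Ideal.span {X 1, X 2} := by
  obtain ⟨⟨hprime, hIQ⟩, hmin⟩ := hQ
  have key : ∀ a b c : Fin 3, a ≠ b → c ≠ a → c ≠ b → (X a : R3) ∈ Q → (X b : R3) ∈ Q →
      Q = Ideal.span {X a, X b} := by
    intro a b c hab hca hcb ha hb
    have hle : Ideal.span {X a, X b} ≤ Q := by
      rw [Ideal.span_le]; rintro f (rfl | rfl)
      · exact ha
      · exact hb
    have := hmin ⟨span_pair_isPrime a b hab, I_le_span_pair a b c hab hca hcb⟩ hle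
    exact le_antisymm this hle
  have h01 := hprime.mem_or_mem (hIQ (X_mul_X_mem_I 0 1 (by decide)))
  have h02 := hprime.mem_or_mem (hIQ (X_mul_X_mem_I 0 2 (by decide)))
  have h12 := hprime.mem_or_mem (hIQ (X_mul_X_mem_I 1 2 (by decide)))
  rcases h01 with h0 | h1 <;> rcases h02 with h0' | h2 <;> rcases h12 with h1' | h2'
  · exact Or.inl (key 0 1 2 (by decide) (by decide) (by decide) h0 h1')
  · exact Or.inr (Or.inl (key 0 2 1 (by decide) (by decide) (by decide) h0 h2'))
  · exact Or.inr (Or.inl (key 0 2 1 (by decide) (by decide) (by decide) h0 h2))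
  · exact Or.inr (Or.inl (key 0 2 1 (by decide) (by decide) (by decide) h0 h2))
  · exact Or.inl (key 0 1 2 (by decide) (by decide) (by decide) h0' h1)
  · exact Or.inl (key 0 1 2 (by decide) (by decide) (by decide) h0' h1)
  · exact Or.inr (Or.inr (key 1 2 0 (by decide) (by decide) (by decide) h1 h2))
  · exact Or.inr (Or.inr (key 1 2 0 (by decide) (by decide) (by decide) h1 h2'))

theorem X_pow_prod_eq (p q t : ℕ) : (X 0 ^ p * X 1 ^ q * X 2 ^ t : R3) =
    monomial (Finsupp.single 0 p + Finsupp.single 1 q + Finsupp.single 2 t) 1 := by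
  rw [X_pow_eq_monomial, X_pow_eq_monomial, X_pow_eq_monomial, monomial_mul, monomial_mul]
  norm_num

theorem mono_mem_Ipow (i j k m : ℕ) (hijk : i + j + k = m) (w : Fin 3 →₀ ℕ)
    (h0 : i + j ≤ w 0) (h1 : i + k ≤ w 1) (h2 : j + k ≤ w 2) :
    (monomial w (1:ℂ) : R3) ∈ Iabc ^ m := by
  have mem1 : (X 0 * X 1 : R3) ∈ Iabc := Ideal.subset_span (Or.inl rfl)
  have mem2 : (X 0 * X 2 : R3) ∈ Iabc := Ideal.subset_span (Or.inr (Or.inl rfl))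
  have mem3 : (X 1 * X 2 : R3) ∈ Iabc := Ideal.subset_span (Or.inr (Or.inr rfl))
  set u : Fin 3 →₀ ℕ := Finsupp.single 0 (i+j) + Finsupp.single 1 (i+k) + Finsupp.single 2 (j+k)
    with hu
  have hprod : ((X 0 * X 1)^i * (X 0 * X 2)^j * (X 1 * X 2)^k : R3) = monomial u 1 := by
    rw [hu, ← X_pow_prod_eq]
    ring
  have hmem : (monomial u (1:ℂ) : R3) ∈ Iabc ^ m := by
    rw [← hprod, ← hijk, pow_add, pow_add]
    exact Ideal.mul_mem_mul (Ideal.mul_mem_mul (Ideal.pow_mem_pow mem1 i)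
      (Ideal.pow_mem_pow mem2 j)) (Ideal.pow_mem_pow mem3 k)
  have hle : ∀ x : Fin 3, u x ≤ w x := by
    intro x
    fin_cases x <;> simp [hu, Finsupp.single_apply] <;> omega
  have hwu : w - u + u = w := by
    ext x
    rw [Finsupp.add_apply, Finsupp.tsub_apply]
    exact Nat.sub_add_cancel (hle x)
  have hw : (monomial w (1:ℂ) : R3) = monomial (w - u) 1 * monomial u 1 := by
    rw [monomial_mul, one_mul, hwu]
  rw [hw]
  exact Ideal.mul_mem_left _ _ hmem

theorem s_not_mem_span_pair (a b c : Fin 3) (hca : c ≠ a) (hcb : c ≠ b) (m : ℕ) (hm : 1 ≤ m)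
    (f : R3) (hf : f = X a ^ m + X b ^ m + X c ^ m) :
    f ∉ (Ideal.span {X a, X b} : Ideal R3) := by
  intro h
  rw [span_pair_eq_mspan] at h
  have hsupp : Finsupp.single c m ∈ f.support := by
    rw [MvPolynomial.mem_support_iff, hf]
    have hne : ∀ i : Fin 3, i ≠ c → Finsupp.single i m ≠ Finsupp.single c m := by
      intro i hic heq
      rcases (Finsupp.single_eq_single_iff _ _ _ _).mp heq with ⟨h1, _⟩ | ⟨h1, _⟩
      · exact hic h1
      · omega
    rw [X_pow_eq_monomial, X_pow_eq_monomial, X_pow_eq_monomial]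
    rw [MvPolynomial.coeff_add, MvPolynomial.coeff_add, coeff_monomial, coeff_monomial,
      coeff_monomial]
    rw [if_neg (fun h => hne a (Ne.symm hca) (by rw [h])), 
      if_neg (fun h => hne b (Ne.symm hcb) (by rw [h])), if_pos rfl]
    norm_num
  have := support_of_mem_mspan (P := fun u => 1 ≤ u a + u b)
    (fun u w hu => by simp [Finsupp.add_apply]; omega) h (Finsupp.single c m) hsupp
  simp only [Finsupp.single_apply] at this
  rw [if_neg hca, if_neg hcb] at this
  omega

theorem mono_mem_symbolic_iff (m : ℕ) (hm : 1 ≤ m) (v : Fin 3 →₀ ℕ) :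
    (monomial v (1:ℂ)) ∈ symbolicPower Iabc m ↔
      (m ≤ v 0 + v 1 ∧ m ≤ v 0 + v 2 ∧ m ≤ v 1 + v 2) := by
  constructor
  · intro h
    rw [ELS.symbolicPower, mem_satIdeal] at h
    obtain ⟨s, hs, hsf⟩ := h
    have key : ∀ a b c : Fin 3, a ≠ b → c ≠ a → c ≠ b → m ≤ v a + v b := by
      intro a b c hab hca hcb
      have hsQ : s ∉ (Ideal.span {X a, X b} : Ideal R3) :=
        hs _ (span_pair_mem_minimalPrimes a b c hab hca hcb)
      have hmem : s * monomial v 1 ∈ mspan (fun u => m ≤ u a + u b) :=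
        span_pair_pow_le a b m (Ideal.pow_right_mono (I_le_span_pair a b c hab hca hcb) m hsf)
      have hex : ∃ u ∈ s.support, u a = 0 ∧ u b = 0 := by
        by_contra hcon
        push_neg at hcon
        apply hsQ
        rw [span_pair_eq_mspan]
        apply mem_mspan_of_support
        intro u hu
        have := hcon u hu
        omega
      obtain ⟨u, hu, hua, hub⟩ := hex
      have hcoeff : coeff (u + v) (s * monomial v 1) = coeff u s := by
        rw [MvPolynomial.coeff_mul_monomial, mul_one]
      have hsupp : (u + v) ∈ (s * monomial v (1:ℂ)).support := by
        rw [MvPolynomial.mem_support_iff, hcoeff]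
        exact MvPolynomial.mem_support_iff.mp hu
      have := support_of_mem_mspan (P := fun u => m ≤ u a + u b)
        (fun u w hu => by simp [Finsupp.add_apply]; omega) hmem (u + v) hsupp
      simp only [Finsupp.add_apply] at this
      omega
    exact ⟨key 0 1 2 (by decide) (by decide) (by decide),
      key 0 2 1 (by decide) (by decide) (by decide),
      key 1 2 0 (by decide) (by decide) (by decide)⟩
  · rintro ⟨hv01, hv02, hv12⟩
    rw [ELS.symbolicPower, mem_satIdeal]
    refine ⟨X 0 ^ m + X 1 ^ m + X 2 ^ m, ?_, ?_⟩
    · intro Q hQ hmemQ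
      rcases minimalPrimes_I_sub Q hQ with rfl | rfl | rfl
      · exact s_not_mem_span_pair 0 1 2 (by decide) (by decide) m hm _ rfl hmemQ
      · exact s_not_mem_span_pair 0 2 1 (by decide) (by decide) m hm _ (by ring) hmemQ
      · exact s_not_mem_span_pair 1 2 0 (by decide) (by decide) m hm _ (by ring) hmemQ
    · have e : (X 0 ^ m + X 1 ^ m + X 2 ^ m : R3) * monomial v 1 =
          monomial (Finsupp.single 0 m + v) 1 + monomial (Finsupp.single 1 m + v) 1 +
            monomial (Finsupp.single 2 m + v) 1 := by
        rw [add_mul, add_mul, X_pow_eq_monomial, X_pow_eq_monomial, X_pow_eq_monomial,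
          monomial_mul, monomial_mul, monomial_mul, one_mul]
      rw [e]
      refine Ideal.add_mem _ (Ideal.add_mem _ ?_ ?_) ?_
      · refine mono_mem_Ipow (min (v 1) m) (m - min (v 1) m) 0 m (by omega) _ ?_ ?_ ?_ <;>
          simp [Finsupp.add_apply, Finsupp.single_apply] <;> omega
      · refine mono_mem_Ipow (min (v 0) m) 0 (m - min (v 0) m) m (by omega) _ ?_ ?_ ?_ <;>
          simp [Finsupp.add_apply, Finsupp.single_apply] <;> omega
      · refine mono_mem_Ipow 0 (min (v 0) m) (m - min (v 0) m) m (by omega) _ ?_ ?_ ?_ <;>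
          simp [Finsupp.add_apply, Finsupp.single_apply] <;> omega

def Eset (m : ℕ) : Set (Fin 3 → ℝ) :=
  {x | ∃ v : Fin 3 →₀ ℕ, (m ≤ v 0 + v 1 ∧ m ≤ v 0 + v 2 ∧ m ≤ v 1 + v 2) ∧
    x = fun i => (v i : ℝ)}

theorem natpt_mem (m : ℕ) (k : Fin 3 → ℕ) (h01 : m ≤ k 0 + k 1) (h02 : m ≤ k 0 + k 2)
    (h12 : m ≤ k 1 + k 2) : (fun i => (k i : ℝ)) ∈ Eset m := by
  refine ⟨Finsupp.equivFunOnFinite.symm k, ?_, ?_⟩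
  · simpa using ⟨h01, h02, h12⟩
  · funext i; simp

theorem round_coord (s : Set (Fin 3 → ℝ)) (z : Fin 3 → ℝ) (i : Fin 3) (hzi : 0 ≤ z i)
    (h : ∀ k : ℕ, (z i - 1 : ℝ) < k → (k : ℝ) < z i + 1 →
      Function.update z i (k : ℝ) ∈ convexHull ℝ s) :
    z ∈ convexHull ℝ s := by
  set k0 : ℕ := ⌊z i⌋₊ with hk0
  have hfl : (k0 : ℝ) ≤ z i := Nat.floor_le hzi
  have hfu : z i < (k0 : ℝ) + 1 := Nat.lt_floor_add_one (z i)
  rcases eq_or_lt_of_le hfl with heq | hlt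
  · have hupd : Function.update z i ((k0 : ℝ)) = z := by
      rw [heq, Function.update_eq_self]
    have := h k0 (by linarith) (by linarith)
    rwa [hupd] at this
  · set t : ℝ := z i - k0 with ht
    have ht0 : 0 < t := by simp [ht]; linarith
    have ht1 : t < 1 := by simp [ht]; linarith
    have h0 := h k0 (by linarith) (by linarith)
    have h1 := h (k0 + 1) (by push_cast; linarith) (by push_cast; linarith)
    have hcomb := (convex_convexHull ℝ s) h0 h1 (by linarith : (0:ℝ) ≤ 1 - t)
      (by linarith : (0:ℝ) ≤ t) (by ring)
    have hz : z = (1 - t) • Function.update z i ((k0:ℝ)) +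
        t • Function.update z i ((((k0 + 1 : ℕ)):ℝ)) := by
      funext j
      simp only [Pi.add_apply, Pi.smul_apply, smul_eq_mul, Function.update_apply]
      rcases eq_or_ne j i with rfl | hne
      · rw [if_pos rfl, if_pos rfl]; push_cast; linarith
      · rw [if_neg hne, if_neg hne]; ring
    rw [hz]; exact hcomb

theorem upward (m : ℕ) (n : Fin 3 → ℕ) (h01 : m ≤ n 0 + n 1) (h02 : m ≤ n 0 + n 2)
    (h12 : m ≤ n 1 + n 2) (z : Fin 3 → ℝ) (hz : ∀ i, (n i : ℝ) ≤ z i) :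
    z ∈ convexHull ℝ (Eset m) := by
  have hnle : ∀ (x : ℝ) (a k : ℕ), (a : ℝ) ≤ x → (x - 1 : ℝ) < k → a ≤ k := by
    intro x a k hax hk
    have : (a : ℝ) < (k : ℝ) + 1 := by linarith
    exact_mod_cast Nat.lt_add_one_iff.mp (by exact_mod_cast this)
  apply round_coord _ _ 0 (le_trans (Nat.cast_nonneg _) (hz 0))
  intro p hp1 hp2
  have hnp : n 0 ≤ p := hnle (z 0) (n 0) p (hz 0) hp1
  apply round_coord _ _ 1 (by
    rw [Function.update_apply, if_neg (by decide : (1 : Fin 3) ≠ 0)]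
    exact le_trans (Nat.cast_nonneg _) (hz 1))
  intro q hq1 hq2
  rw [Function.update_apply, if_neg (by decide : (1 : Fin 3) ≠ 0)] at hq1 hq2
  have hnq : n 1 ≤ q := hnle (z 1) (n 1) q (hz 1) hq1
  apply round_coord _ _ 2 (by
    rw [Function.update_apply, if_neg (by decide : (2 : Fin 3) ≠ 1),
      Function.update_apply, if_neg (by decide : (2 : Fin 3) ≠ 0)]
    exact le_trans (Nat.cast_nonneg _) (hz 2))
  intro w hw1 hw2
  rw [Function.update_apply, if_neg (by decide : (2 : Fin 3) ≠ 1),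
    Function.update_apply, if_neg (by decide : (2 : Fin 3) ≠ 0)] at hw1 hw2
  have hnw : n 2 ≤ w := hnle (z 2) (n 2) w (hz 2) hw1
  have : Function.update (Function.update (Function.update z 0 (p:ℝ)) 1 (q:ℝ)) 2 (w:ℝ) =
      (fun i => ((![p, q, w] : Fin 3 → ℕ) i : ℝ)) := by
    funext j
    fin_cases j <;> simp [Function.update_apply]
  rw [this]
  exact subset_convexHull ℝ _ (natpt_mem m ![p, q, w] (by simpa using by omega)
    (by simpa using by omega) (by simpa using by omega))

theorem pair_sum (m : ℕ) (v : Fin 3 → ℕ) (h01 : m ≤ v 0 + v 1) (h02 : m ≤ v 0 + v 2)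
    (h12 : m ≤ v 1 + v 2) (a b : Fin 3) (hab : a ≠ b) : m ≤ v a + v b := by
  fin_cases a <;> fin_cases b <;> simp_all <;> omega

theorem perm_hull (m : ℕ) (σ : Equiv.Perm (Fin 3)) (x : Fin 3 → ℝ)
    (hx : x ∈ convexHull ℝ (Eset m)) : (x ∘ σ) ∈ convexHull ℝ (Eset m) := by
  set f : (Fin 3 → ℝ) →ₗ[ℝ] (Fin 3 → ℝ) := LinearMap.funLeft ℝ ℝ σ with hf
  have hsub : Eset m ⊆ f ⁻¹' (convexHull ℝ (Eset m)) := by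
    rintro y ⟨v, ⟨h01, h02, h12⟩, rfl⟩
    apply subset_convexHull
    refine ⟨Finsupp.equivFunOnFinite.symm (fun i => v (σ i)), ⟨?_, ?_, ?_⟩, ?_⟩
    · simpa using pair_sum m (fun i => v i) h01 h02 h12 (σ 0) (σ 1)
        (fun h => (by decide : (0 : Fin 3) ≠ 1) (σ.injective h))
    · simpa using pair_sum m (fun i => v i) h01 h02 h12 (σ 0) (σ 2)
        (fun h => (by decide : (0 : Fin 3) ≠ 2) (σ.injective h))
    · simpa using pair_sum m (fun i => v i) h01 h02 h12 (σ 1) (σ 2)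
        (fun h => (by decide : (1 : Fin 3) ≠ 2) (σ.injective h))
    · funext i; simp [hf, LinearMap.funLeft_apply]
  have := convexHull_min hsub ((convex_convexHull ℝ (Eset m)).linear_preimage f) hx
  exact this

set_option maxHeartbeats 1000000 in
theorem core (r m : ℕ) (hr : 1 ≤ r) (hm : m + 1 = 2 * r) (z : Fin 3 → ℝ)
    (h0 : 0 ≤ z 0) (h1 : 0 ≤ z 1) (h2 : 0 ≤ z 2)
    (h02 : (m : ℝ) ≤ z 0 + z 2) (h12 : (m : ℝ) ≤ z 1 + z 2)
    (hsum : 3 * (r : ℝ) - 1 ≤ z 0 + z 1 + z 2) (hz2 : z 2 < r) :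
    z ∈ convexHull ℝ (Eset m) := by
  have hmr : (m : ℝ) = 2 * (r : ℝ) - 1 := by
    have : (m : ℝ) + 1 = 2 * r := by exact_mod_cast hm
    linarith
  set c0 : ℕ := ⌊z 2⌋₊ with hc0
  have hfl : (c0 : ℝ) ≤ z 2 := Nat.floor_le h2
  have hfu : z 2 < (c0 : ℝ) + 1 := Nat.lt_floor_add_one (z 2)
  set θ : ℝ := z 2 - c0 with hθdef
  have hθ0 : 0 ≤ θ := by simp [hθdef]; linarith
  have hθ1 : θ < 1 := by simp [hθdef]; linarith
  have hc0r : c0 + 1 ≤ r := by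
    have : (c0 : ℝ) < r := lt_of_le_of_lt hfl hz2
    exact_mod_cast this
  have hz2eq : z 2 = (c0 : ℝ) + θ := by simp [hθdef]
  by_cases hcase : c0 + 2 ≤ r
  · -- Case A
    have hc1m : c0 + 1 ≤ m := by omega
    have hcast1 : ((m - c0 : ℕ) : ℝ) = (m : ℝ) - c0 := by
      rw [Nat.cast_sub (by omega)]
    have hcast2 : ((m - c0 - 1 : ℕ) : ℝ) = (m : ℝ) - c0 - 1 := by
      rw [Nat.cast_sub (by omega), Nat.cast_sub (by omega)]; norm_num
    set p : Fin 3 → ℝ := ![(z 0 - θ * ((m:ℝ) - c0 - 1)) / (1 - θ),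
      (z 1 - θ * ((m:ℝ) - c0 - 1)) / (1 - θ), (c0 : ℝ)] with hp
    set q : Fin 3 → ℝ := ![(m:ℝ) - c0 - 1, (m:ℝ) - c0 - 1, (c0 : ℝ) + 1] with hq
    have hz0b : (m:ℝ) - c0 - θ ≤ z 0 := by rw [hz2eq] at h02; linarith
    have hz1b : (m:ℝ) - c0 - θ ≤ z 1 := by rw [hz2eq] at h12; linarith
    have hpmem : p ∈ convexHull ℝ (Eset m) := by
      have hb0 : ((m - c0 : ℕ) : ℝ) ≤ p 0 := by
        have he : p 0 = (z 0 - θ * ((m:ℝ) - c0 - 1)) / (1 - θ) := rfl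
        rw [he, hcast1, le_div_iff₀ (by linarith : (0:ℝ) < 1 - θ)]
        nlinarith
      have hb1 : ((m - c0 : ℕ) : ℝ) ≤ p 1 := by
        have he : p 1 = (z 1 - θ * ((m:ℝ) - c0 - 1)) / (1 - θ) := rfl
        rw [he, hcast1, le_div_iff₀ (by linarith : (0:ℝ) < 1 - θ)]
        nlinarith
      have hb2 : ((c0 : ℕ) : ℝ) ≤ p 2 := le_of_eq rfl
      apply upward m ![m - c0, m - c0, c0] (by simp; omega) (by simp; omega) (by simp; omega)
      intro i
      fin_cases i
      · exact hb0
      · exact hb1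
      · exact hb2
    have hqmem : q ∈ convexHull ℝ (Eset m) := by
      have hb0 : ((m - c0 - 1 : ℕ) : ℝ) ≤ q 0 := by rw [hcast2]; exact le_of_eq rfl
      have hb2 : ((c0 + 1 : ℕ) : ℝ) ≤ q 2 := by push_cast; exact le_of_eq rfl
      apply upward m ![m - c0 - 1, m - c0 - 1, c0 + 1] (by simp; omega) (by simp; omega)
        (by simp; omega)
      intro i
      fin_cases i
      · exact hb0
      · exact hb0
      · exact hb2
    have hzeq : z = (1 - θ) • p + θ • q := by
      funext j
      fin_cases j
      · show z 0 = (1 - θ) * ((z 0 - θ * ((m:ℝ) - c0 - 1)) / (1 - θ)) + θ * ((m:ℝ) - c0 - 1)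
        rw [mul_comm ((1:ℝ) - θ), div_mul_cancel₀ _ (by linarith : (1:ℝ) - θ ≠ 0)]; ring
      · show z 1 = (1 - θ) * ((z 1 - θ * ((m:ℝ) - c0 - 1)) / (1 - θ)) + θ * ((m:ℝ) - c0 - 1)
        rw [mul_comm ((1:ℝ) - θ), div_mul_cancel₀ _ (by linarith : (1:ℝ) - θ ≠ 0)]; ring
      · show z 2 = (1 - θ) * (c0 : ℝ) + θ * ((c0 : ℝ) + 1)
        rw [hz2eq]; ring
    rw [hzeq]
    exact (convex_convexHull ℝ (Eset m)) hpmem hqmem (by linarith) (by linarith) (by ring)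
  · -- Case B : c0 = r - 1
    have hc0eq : c0 + 1 = r := by omega
    have hc0cast : (c0 : ℝ) = (r : ℝ) - 1 := by
      have : ((c0 : ℕ) : ℝ) + 1 = r := by exact_mod_cast hc0eq
      linarith
    have hz0b : (r : ℝ) - θ ≤ z 0 := by rw [hz2eq, hc0cast] at h02; linarith
    have hz1b : (r : ℝ) - θ ≤ z 1 := by rw [hz2eq, hc0cast] at h12; linarith
    have hzsb : 2 * (r : ℝ) - θ ≤ z 0 + z 1 := by rw [hz2eq, hc0cast] at hsum; linarith
    have hrcast : ((r - 1 : ℕ) : ℝ) = (r : ℝ) - 1 := by rw [Nat.cast_sub hr]; norm_num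
    by_cases hθz : θ = 0
    · apply upward m ![r, r, r - 1] (by simp; omega) (by simp; omega) (by simp; omega)
      intro i
      fin_cases i
      · show ((r:ℕ):ℝ) ≤ z 0
        rw [hθz] at hz0b; linarith
      · show ((r:ℕ):ℝ) ≤ z 1
        rw [hθz] at hz1b; linarith
      · show ((r - 1 : ℕ):ℝ) ≤ z 2
        rw [hrcast, hz2eq, hθz, hc0cast]; linarith
    · have hθpos : 0 < θ := lt_of_le_of_ne hθ0 (Ne.symm hθz)
      set lam2 : ℝ := max 0 ((r : ℝ) - z 1) with hlam2
      have hlam20 : 0 ≤ lam2 := le_max_left _ _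
      have hlam2θ : lam2 ≤ θ := by
        rw [hlam2, max_le_iff]
        exact ⟨hθ0, by linarith⟩
      have hlam2z : (r : ℝ) - z 1 ≤ lam2 := le_max_right _ _
      have hlam3z : (r : ℝ) - z 0 ≤ θ - lam2 := by
        rw [hlam2]
        rcases le_or_gt ((r : ℝ) - z 1) 0 with h | h
        · rw [max_eq_left h]; linarith
        · rw [max_eq_right h.le]; linarith
      set lam3 : ℝ := θ - lam2 with hlam3
      have hlam30 : 0 ≤ lam3 := by rw [hlam3]; linarith
      have hP2mem : (![(r:ℝ), (r:ℝ) - 1, (r:ℝ)] : Fin 3 → ℝ) ∈ convexHull ℝ (Eset m) := by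
        apply upward m ![r, r - 1, r] (by simp; omega) (by simp; omega) (by simp; omega)
        intro i
        fin_cases i
        · exact le_of_eq rfl
        · show ((r - 1 : ℕ):ℝ) ≤ (r:ℝ) - 1
          rw [hrcast]
        · exact le_of_eq rfl
      have hP3mem : (![(r:ℝ) - 1, (r:ℝ), (r:ℝ)] : Fin 3 → ℝ) ∈ convexHull ℝ (Eset m) := by
        apply upward m ![r - 1, r, r] (by simp; omega) (by simp; omega) (by simp; omega)
        intro i
        fin_cases i
        · show ((r - 1 : ℕ):ℝ) ≤ (r:ℝ) - 1
          rw [hrcast]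
        · exact le_of_eq rfl
        · exact le_of_eq rfl
      set P1 : Fin 3 → ℝ := ![(z 0 - lam2 * r - lam3 * ((r:ℝ) - 1)) / (1 - θ),
        (z 1 - lam2 * ((r:ℝ) - 1) - lam3 * r) / (1 - θ), (r : ℝ) - 1] with hP1
      have hP1mem : P1 ∈ convexHull ℝ (Eset m) := by
        apply upward m ![r, r, r - 1] (by simp; omega) (by simp; omega) (by simp; omega)
        intro i
        fin_cases i
        · show ((r:ℕ):ℝ) ≤ P1 0
          have he : P1 0 = (z 0 - lam2 * r - lam3 * ((r:ℝ) - 1)) / (1 - θ) := rfl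
          rw [he, le_div_iff₀ (by linarith : (0:ℝ) < 1 - θ)]
          have hprod : lam2 * (r:ℝ) + lam3 * (r:ℝ) = θ * (r:ℝ) := by rw [hlam3]; ring
          linarith [hlam3z]
        · show ((r:ℕ):ℝ) ≤ P1 1
          have he : P1 1 = (z 1 - lam2 * ((r:ℝ) - 1) - lam3 * r) / (1 - θ) := rfl
          rw [he, le_div_iff₀ (by linarith : (0:ℝ) < 1 - θ)]
          have hprod : lam2 * (r:ℝ) + lam3 * (r:ℝ) = θ * (r:ℝ) := by rw [hlam3]; ring
          linarith [hlam2z]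
        · show ((r - 1:ℕ):ℝ) ≤ P1 2
          rw [hrcast]
          exact le_of_eq rfl
      set w : Fin 3 → ℝ := (lam2 / θ) • ![(r:ℝ), (r:ℝ) - 1, (r:ℝ)] +
        (lam3 / θ) • ![(r:ℝ) - 1, (r:ℝ), (r:ℝ)] with hw
      have hwmem : w ∈ convexHull ℝ (Eset m) :=
        (convex_convexHull ℝ (Eset m)) hP2mem hP3mem (by positivity) (by positivity)
          (by rw [← add_div, hlam3]; field_simp; ring)
      have hzeq : z = (1 - θ) • P1 + θ • w := by
        have hl23 : lam2 + lam3 = θ := by rw [hlam3]; ring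
        funext j
        fin_cases j
        · show z 0 = (1 - θ) * ((z 0 - lam2 * r - lam3 * ((r:ℝ) - 1)) / (1 - θ)) +
            θ * ((lam2 / θ) * (r:ℝ) + (lam3 / θ) * ((r:ℝ) - 1))
          rw [mul_comm ((1:ℝ) - θ), div_mul_cancel₀ _ (by linarith : (1:ℝ) - θ ≠ 0)]
          field_simp
          ring
        · show z 1 = (1 - θ) * ((z 1 - lam2 * ((r:ℝ) - 1) - lam3 * r) / (1 - θ)) +
            θ * ((lam2 / θ) * ((r:ℝ) - 1) + (lam3 / θ) * (r:ℝ))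
          rw [mul_comm ((1:ℝ) - θ), div_mul_cancel₀ _ (by linarith : (1:ℝ) - θ ≠ 0)]
          field_simp
          ring
        · show z 2 = (1 - θ) * ((r:ℝ) - 1) + θ * ((lam2 / θ) * (r:ℝ) + (lam3 / θ) * (r:ℝ))
          rw [hz2eq, hc0cast]
          field_simp
          nlinarith [hl23]

      rw [hzeq]
      exact (convex_convexHull ℝ (Eset m)) hP1mem hwmem (by linarith) (by linarith) (by ring)

theorem hull_eq (r m : ℕ) (hr : 1 ≤ r) (hm : m + 1 = 2 * r) :
    convexHull ℝ (Eset m) =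
      {w : Fin 3 → ℝ | (∀ i, 0 ≤ w i) ∧ 2 * (r : ℝ) - 1 ≤ w 0 + w 1 ∧
        2 * (r : ℝ) - 1 ≤ w 0 + w 2 ∧ 2 * (r : ℝ) - 1 ≤ w 1 + w 2 ∧
        3 * (r : ℝ) - 1 ≤ w 0 + w 1 + w 2} := by
  have hmr : (m : ℝ) = 2 * (r : ℝ) - 1 := by
    have : (m : ℝ) + 1 = 2 * r := by exact_mod_cast hm
    linarith
  apply le_antisymm
  · apply convexHull_min
    · rintro x ⟨v, ⟨h01, h02, h12⟩, rfl⟩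
      have hsum : 3 * r - 1 ≤ v 0 + v 1 + v 2 := by omega
      refine ⟨fun i => Nat.cast_nonneg (v i), ?_, ?_, ?_, ?_⟩
      · have hc : (m:ℝ) ≤ (v 0 : ℝ) + (v 1 : ℝ) := by exact_mod_cast h01
        rw [hmr] at hc; exact hc
      · have hc : (m:ℝ) ≤ (v 0 : ℝ) + (v 2 : ℝ) := by exact_mod_cast h02
        rw [hmr] at hc; exact hc
      · have hc : (m:ℝ) ≤ (v 1 : ℝ) + (v 2 : ℝ) := by exact_mod_cast h12
        rw [hmr] at hc; exact hc
      · have h3 : ((3 * r - 1 : ℕ) : ℝ) ≤ ((v 0 + v 1 + v 2 : ℕ) : ℝ) := by exact_mod_cast hsum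
        have hc : ((3 * r - 1 : ℕ) : ℝ) = 3 * (r : ℝ) - 1 := by
          rw [Nat.cast_sub (by omega)]; push_cast; ring
        rw [hc] at h3
        push_cast at h3
        linarith
    · intro x hx y hy a b ha hb hab
      obtain ⟨hx0, hx1, hx2, hx3, hx4⟩ := hx
      obtain ⟨hy0, hy1, hy2, hy3, hy4⟩ := hy
      refine ⟨fun i => ?_, ?_, ?_, ?_, ?_⟩
      · have := hx0 i; have := hy0 i
        simp only [Pi.add_apply, Pi.smul_apply, smul_eq_mul]
        nlinarith
      all_goals
        simp only [Pi.add_apply, Pi.smul_apply, smul_eq_mul]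
        nlinarith
  · rintro z ⟨hz0, h01, h02, h12, hsum⟩
    rw [← hmr] at h01 h02 h12
    by_cases hall : (r : ℝ) ≤ z 0 ∧ (r : ℝ) ≤ z 1 ∧ (r : ℝ) ≤ z 2
    · apply upward m ![r, r, r] (by simp; omega) (by simp; omega) (by simp; omega)
      intro i
      fin_cases i
      · exact hall.1
      · exact hall.2.1
      · exact hall.2.2
    · rcases not_and_or.mp hall with hlt | hrest
      · -- z 0 < r
        push_neg at hlt
        have hcore : (![z 2, z 1, z 0] : Fin 3 → ℝ) ∈ convexHull ℝ (Eset m) := by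
          apply core r m hr hm ![z 2, z 1, z 0] (hz0 2) (hz0 1) (hz0 0)
          · show (m : ℝ) ≤ z 2 + z 0; linarith
          · show (m : ℝ) ≤ z 1 + z 0; linarith
          · show 3 * (r : ℝ) - 1 ≤ z 2 + z 1 + z 0; linarith
          · exact hlt
        have := perm_hull m (Equiv.swap 0 2) ![z 2, z 1, z 0] hcore
        have heq : (![z 2, z 1, z 0] : Fin 3 → ℝ) ∘ (Equiv.swap 0 2) = z := by
          funext j
          fin_cases j <;> simp [Equiv.swap_apply_left, Equiv.swap_apply_right,
            Equiv.swap_apply_of_ne_of_ne]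
        rwa [heq] at this
      · rcases not_and_or.mp hrest with hlt | hlt
        · -- z 1 < r
          push_neg at hlt
          have hcore : (![z 0, z 2, z 1] : Fin 3 → ℝ) ∈ convexHull ℝ (Eset m) := by
            apply core r m hr hm ![z 0, z 2, z 1] (hz0 0) (hz0 2) (hz0 1)
            · show (m : ℝ) ≤ z 0 + z 1; linarith
            · show (m : ℝ) ≤ z 2 + z 1; linarith
            · show 3 * (r : ℝ) - 1 ≤ z 0 + z 2 + z 1; linarith
            · exact hlt
          have := perm_hull m (Equiv.swap 1 2) ![z 0, z 2, z 1] hcore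
          have heq : (![z 0, z 2, z 1] : Fin 3 → ℝ) ∘ (Equiv.swap 1 2) = z := by
            funext j
            fin_cases j <;> simp [Equiv.swap_apply_left, Equiv.swap_apply_right,
              Equiv.swap_apply_of_ne_of_ne]
          rwa [heq] at this
        · -- z 2 < r
          push_neg at hlt
          exact core r m hr hm z (hz0 0) (hz0 1) (hz0 2) h02 h12 hsum hlt

open MvPolynomial in
/-- for `I = (xy, xz, yz) ⊆ ℂ[x,y,z]` and `r ≥ 1`,
`Newt(I^{(2r-1)}) = {(a,b,c) : a,b,c ≥ 0, a+b, a+c, b+c ≥ 2r-1, a+b+c ≥ 3r-1}`. -/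
theorem stmt17 (r : ℕ) (hr : 1 ≤ r) :
    ELS.newt (ELS.symbolicPower
        (Ideal.span {X 0 * X 1, X 0 * X 2, X 1 * X 2} : Ideal (MvPolynomial (Fin 3) ℂ))
        (2 * r - 1)) =
      {w : Fin 3 → ℝ | (∀ i, 0 ≤ w i) ∧ 2 * (r : ℝ) - 1 ≤ w 0 + w 1 ∧
        2 * (r : ℝ) - 1 ≤ w 0 + w 2 ∧ 2 * (r : ℝ) - 1 ≤ w 1 + w 2 ∧
        3 * (r : ℝ) - 1 ≤ w 0 + w 1 + w 2} := by
  have hm : (2 * r - 1) + 1 = 2 * r := by omega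
  have h1m : 1 ≤ 2 * r - 1 := by omega
  have hE : ELS.monomSet (ELS.symbolicPower
      (Ideal.span {X 0 * X 1, X 0 * X 2, X 1 * X 2} : Ideal (MvPolynomial (Fin 3) ℂ))
      (2 * r - 1)) = Eset (2 * r - 1) := by
    ext x
    simp only [ELS.monomSet, Eset, Set.mem_setOf_eq]
    constructor
    · rintro ⟨v, hv, rfl⟩
      exact ⟨v, (mono_mem_symbolic_iff _ h1m v).mp hv, rfl⟩
    · rintro ⟨v, hv, rfl⟩
      exact ⟨v, (mono_mem_symbolic_iff _ h1m v).mpr hv, rfl⟩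
  rw [ELS.newt, hE]
  exact hull_eq r (2 * r - 1) hr hm
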